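/- arXiv:1606.03437 — 5 statements merged into one kernel-verified Lean document; each statement's English description precedes it below -/
import Mathlib

section
/- Let S be a symmetric positive definite n×n real matrix, H an n×p real matrix, and ε > 0 a real number. If the p×p matrix ε⁻¹·I − Hᵀ S H is positive definite, then the n×n matrix S⁻¹ − ε·H Hᵀ is positive definite (in particular, it is invertible). -/
open Matrix

lemma posDef_smul_aux {m : ℕ} {M : Matrix (Fin m) (Fin m) ℝ} (hM : M.PosDef)
    {c : ℝ} (hc : 0 < c) : (c • M).PosDef := by
  have hh : (c • M).IsHermitian := by
    rw [Matrix.IsHermitian, conjTranspose_smul, hM.1.eq]; simp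
  refine posDef_iff_dotProduct_mulVec.mpr ⟨hh, fun x hx => ?_⟩
  have := hM.dotProduct_mulVec_pos hx
  rw [smul_mulVec, dotProduct_smul]
  exact mul_pos hc this

lemma posDef_of_posSemidef_det_ne_zero {m : ℕ} {M : Matrix (Fin m) (Fin m) ℝ}
    (hM : M.PosSemidef) (hd : M.det ≠ 0) : M.PosDef := by
  refine posDef_iff_dotProduct_mulVec.mpr ⟨hM.1, fun x hx => ?_⟩
  rcases lt_or_eq_of_le (hM.dotProduct_mulVec_nonneg x) with h | h
  · exact h
  · exfalso
    have hMx : M *ᵥ x = 0 := (hM.dotProduct_mulVec_zero_iff x).mp h.symm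
    have hu : IsUnit M := (Matrix.isUnit_iff_isUnit_det M).mpr hd.isUnit
    haveI := hu.invertible
    apply hx
    calc x = (M⁻¹ * M) *ᵥ x := by rw [Matrix.nonsing_inv_mul M hd.isUnit, one_mulVec]
    _ = M⁻¹ *ᵥ (M *ᵥ x) := by rw [mulVec_mulVec]
    _ = 0 := by rw [hMx, mulVec_zero]

theorem stmt_0 {n p : ℕ}
    (S : Matrix (Fin n) (Fin n) ℝ) (H : Matrix (Fin n) (Fin p) ℝ)
    (ε : ℝ) (hε : 0 < ε)
    (hS : S.PosDef)
    (h : (ε⁻¹ • (1 : Matrix (Fin p) (Fin p) ℝ) - Hᵀ * S * H).PosDef) :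
    (S⁻¹ - ε • (H * Hᵀ)).PosDef := by
  haveI := hS.isUnit.invertible
  have hA : (S⁻¹).PosDef := hS.inv
  haveI := hA.isUnit.invertible
  have hD : ((ε⁻¹ • 1 : Matrix (Fin p) (Fin p) ℝ)).PosDef :=
    posDef_smul_aux Matrix.PosDef.one (inv_pos.mpr hε)
  haveI := hD.isUnit.invertible
  -- the schur complement wrt the (1,1) block of the block matrix
  have key1 : ((ε⁻¹ • 1 : Matrix (Fin p) (Fin p) ℝ) - Hᴴ * (S⁻¹)⁻¹ * H).PosSemidef := by
    rw [Matrix.inv_inv_of_invertible S]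
    have : Hᴴ = Hᵀ := by ext i j; simp
    rw [this]
    exact h.posSemidef
  have hblock : (Matrix.fromBlocks S⁻¹ H Hᴴ (ε⁻¹ • 1)).PosSemidef :=
    (Matrix.PosDef.fromBlocks₁₁ H (ε⁻¹ • 1) hA).mpr key1
  have key2 : (S⁻¹ - H * (ε⁻¹ • 1 : Matrix (Fin p) (Fin p) ℝ)⁻¹ * Hᴴ).PosSemidef :=
    (Matrix.PosDef.fromBlocks₂₂ S⁻¹ H hD).mp hblock
  have hinv : ((ε⁻¹ • 1 : Matrix (Fin p) (Fin p) ℝ))⁻¹ = ε • 1 := by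
    refine Matrix.inv_eq_right_inv ?_
    rw [Matrix.smul_mul, Matrix.mul_smul, one_mul, smul_smul, inv_mul_cancel₀ hε.ne', one_smul]
  have heq : S⁻¹ - H * (ε⁻¹ • 1 : Matrix (Fin p) (Fin p) ℝ)⁻¹ * Hᴴ = S⁻¹ - ε • (H * Hᵀ) := by
    rw [hinv]
    congr 1
    have : Hᴴ = Hᵀ := by ext i j; simp
    rw [this, Matrix.mul_smul, Matrix.smul_mul, Matrix.mul_one]
  rw [heq] at key2
  -- determinant argument
  have hdet1 : (Matrix.fromBlocks S⁻¹ H Hᴴ (ε⁻¹ • 1)).det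
      = (S⁻¹).det * ((ε⁻¹ • 1 : Matrix (Fin p) (Fin p) ℝ) - Hᴴ * (S⁻¹)⁻¹ * H).det := by
    rw [Matrix.det_fromBlocks₁₁]
    congr 2
    rw [Matrix.invOf_eq_nonsing_inv]
  have hdet2 : (Matrix.fromBlocks S⁻¹ H Hᴴ (ε⁻¹ • 1)).det
      = ((ε⁻¹ • 1 : Matrix (Fin p) (Fin p) ℝ)).det * (S⁻¹ - ε • (H * Hᵀ)).det := by
    rw [Matrix.det_fromBlocks₂₂]
    congr 2
    rw [Matrix.invOf_eq_nonsing_inv, heq]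
  have hpos1 : 0 < (Matrix.fromBlocks S⁻¹ H Hᴴ (ε⁻¹ • 1)).det := by
    rw [hdet1]
    have h1 : ((ε⁻¹ • 1 : Matrix (Fin p) (Fin p) ℝ) - Hᴴ * (S⁻¹)⁻¹ * H).PosDef := by
      rw [Matrix.inv_inv_of_invertible S]
      have : Hᴴ = Hᵀ := by ext i j; simp
      rw [this]; exact h
    exact mul_pos hA.det_pos h1.det_pos
  have hdne : (S⁻¹ - ε • (H * Hᵀ)).det ≠ 0 := by
    intro h0
    rw [hdet2, h0, mul_zero] at hpos1
    exact lt_irrefl 0 hpos1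
  exact posDef_of_posSemidef_det_ne_zero key2 hdne
end

section
/- (Key quadratic matrix bound underlying Theorem 1.) Let S be a symmetric positive definite n×n real matrix, H an n×p real matrix, and ε > 0 such that S⁻¹ − ε·H Hᵀ is positive definite, and set X = (S⁻¹ − ε·H Hᵀ)⁻¹. Then for every A ∈ ℝ^{n×n}, every E ∈ ℝ^{l×n}, and every Δ ∈ ℝ^{p×l} such that I − Δᵀ Δ is positive semidefinite, the matrix Aᵀ X A + ε⁻¹·Eᵀ E − (A + H Δ E)ᵀ S (A + H Δ E) is positive semidefinite. -/
open Matrix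

private lemma posDef_smul_one {k : ℕ} {c : ℝ} (hc : 0 < c) :
    (c • (1 : Matrix (Fin k) (Fin k) ℝ)).PosDef := by
  rw [smul_one_eq_diagonal]
  exact .diagonal fun _ => hc

private lemma psd_conj {a b : ℕ} {P : Matrix (Fin a) (Fin a) ℝ} (hP : P.PosSemidef)
    (B : Matrix (Fin a) (Fin b) ℝ) : (Bᵀ * P * B).PosSemidef := by
  have := hP.conjTranspose_mul_mul_same B
  rwa [conjTranspose_eq_transpose_of_trivial] at this

private lemma psd_smul {a : ℕ} {P : Matrix (Fin a) (Fin a) ℝ} (hP : P.PosSemidef)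
    {c : ℝ} (hc : 0 ≤ c) : (c • P).PosSemidef := by
  constructor
  · have := hP.1.eq
    rw [conjTranspose_eq_transpose_of_trivial] at this
    simp [IsHermitian, conjTranspose_smul, this]
  · intro x
    exact (hP.smul hc).2 x

theorem stmt_2 {n p l : ℕ}
    (S : Matrix (Fin n) (Fin n) ℝ) (H : Matrix (Fin n) (Fin p) ℝ)
    (ε : ℝ) (hε : 0 < ε)
    (hS : S.PosDef)
    (h : (S⁻¹ - ε • (H * Hᵀ)).PosDef)
    (X : Matrix (Fin n) (Fin n) ℝ)
    (hX : X = (S⁻¹ - ε • (H * Hᵀ))⁻¹) :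
    ∀ (A : Matrix (Fin n) (Fin n) ℝ) (E : Matrix (Fin l) (Fin n) ℝ)
      (Δ : Matrix (Fin p) (Fin l) ℝ),
      ((1 : Matrix (Fin l) (Fin l) ℝ) - Δᵀ * Δ).PosSemidef →
      (Aᵀ * X * A + ε⁻¹ • (Eᵀ * E)
        - (A + H * Δ * E)ᵀ * S * (A + H * Δ * E)).PosSemidef := by
  intro A E Δ hΔ
  have hSd : IsUnit S.det := isUnit_iff_ne_zero.mpr hS.det_pos.ne'
  haveI : Invertible S := S.invertibleOfIsUnitDet hSd
  have hSinv : S⁻¹.PosDef := hS.inv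
  have hSid : IsUnit S⁻¹.det := isUnit_iff_ne_zero.mpr hSinv.det_pos.ne'
  haveI : Invertible S⁻¹ := S⁻¹.invertibleOfIsUnitDet hSid
  set M : Matrix (Fin p) (Fin p) ℝ := ε⁻¹ • 1 - Hᵀ * S * H with hMdef
  have hD : ((ε⁻¹ : ℝ) • (1 : Matrix (Fin p) (Fin p) ℝ)).PosDef :=
    posDef_smul_one (by positivity)
  haveI : Invertible ((ε⁻¹ : ℝ) • (1 : Matrix (Fin p) (Fin p) ℝ)) :=
    invertibleOfIsUnitDet _ (isUnit_iff_ne_zero.mpr hD.det_pos.ne')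
  have hinvD : ((ε⁻¹ : ℝ) • (1 : Matrix (Fin p) (Fin p) ℝ))⁻¹ = ε • 1 := by
    apply inv_eq_right_inv
    simp [Matrix.smul_mul, Matrix.mul_smul, smul_smul, inv_mul_cancel₀ hε.ne', mul_inv_cancel₀ hε.ne']
  have hHeps : S⁻¹ - H * ((ε⁻¹ : ℝ) • (1 : Matrix (Fin p) (Fin p) ℝ))⁻¹ * Hᴴ
      = S⁻¹ - ε • (H * Hᵀ) := by
    rw [hinvD, conjTranspose_eq_transpose_of_trivial]
    simp [Matrix.mul_smul, Matrix.smul_mul]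
  have hBpsd : (fromBlocks S⁻¹ H Hᴴ ((ε⁻¹ : ℝ) • 1)).PosSemidef := by
    rw [PosDef.fromBlocks₂₂ S⁻¹ H hD, hHeps]
    exact h.posSemidef
  have hMpsd : M.PosSemidef := by
    have := (PosDef.fromBlocks₁₁ H ((ε⁻¹ : ℝ) • 1) hSinv).mp hBpsd
    rwa [nonsing_inv_nonsing_inv S hSd, conjTranspose_eq_transpose_of_trivial,
      ← hMdef] at this
  have hdetM : M.det ≠ 0 := by
    have h1 := det_fromBlocks₁₁ S⁻¹ H Hᴴ ((ε⁻¹ : ℝ) • 1)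
    have h2 := det_fromBlocks₂₂ S⁻¹ H Hᴴ ((ε⁻¹ : ℝ) • 1)
    rw [invOf_eq_nonsing_inv, nonsing_inv_nonsing_inv S hSd] at h1
    rw [conjTranspose_eq_transpose_of_trivial] at h1
    rw [← hMdef] at h1
    rw [invOf_eq_nonsing_inv, hHeps] at h2
    have hne : (fromBlocks S⁻¹ H Hᴴ ((ε⁻¹ : ℝ) • (1 : Matrix (Fin p) (Fin p) ℝ))).det ≠ 0 := by
      rw [h2]
      exact mul_ne_zero hD.det_pos.ne' h.det_pos.ne'
    rw [conjTranspose_eq_transpose_of_trivial] at hne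
    rw [h1] at hne
    exact fun h0 => hne (by rw [h0, mul_zero])
  have hMu : IsUnit M.det := isUnit_iff_ne_zero.mpr hdetM
  haveI : Invertible M := M.invertibleOfIsUnitDet hMu
  have hM : M.PosDef := by
    refine ⟨hMpsd.1, fun x hx => (hMpsd.2 x).lt_of_ne' fun h0 => hx ?_⟩
    have hz : M *ᵥ x = 0 := (hMpsd.dotProduct_mulVec_zero_iff x).mp (by
      simpa [dotProduct, mulVec, Finsupp.sum_fintype, Finset.mul_sum, mul_assoc] using h0)
    have := congrArg (fun v => M⁻¹ *ᵥ v) hz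
    simpa [mulVec_mulVec, nonsing_inv_mul M hMu] using this
  -- basic rewriting facts
  have hSS : S⁻¹ * S = 1 := nonsing_inv_mul S hSd
  have hSSi : S * S⁻¹ = 1 := mul_nonsing_inv S hSd
  have hMM : M⁻¹ * M = 1 := nonsing_inv_mul M hMu
  have hMMi : M * M⁻¹ = 1 := mul_nonsing_inv M hMu
  have hStr : Sᵀ = S := by
    have := hS.1.eq; rwa [conjTranspose_eq_transpose_of_trivial] at this
  have hMtr : Mᵀ = M := by
    have := hM.1.eq; rwa [conjTranspose_eq_transpose_of_trivial] at this
  have hMitr : M⁻¹ᵀ = M⁻¹ := by rw [transpose_nonsing_inv, hMtr]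
  have hSS' : ∀ {k} (Y : Matrix (Fin n) (Fin k) ℝ), S⁻¹ * (S * Y) = Y := by
    intro k Y; rw [← Matrix.mul_assoc, hSS, Matrix.one_mul]
  have hMM' : ∀ {k} (Y : Matrix (Fin p) (Fin k) ℝ), M⁻¹ * (M * Y) = Y := by
    intro k Y; rw [← Matrix.mul_assoc, hMM, Matrix.one_mul]
  have hMMi' : ∀ {k} (Y : Matrix (Fin p) (Fin k) ℝ), M * (M⁻¹ * Y) = Y := by
    intro k Y; rw [← Matrix.mul_assoc, hMMi, Matrix.one_mul]
  have hc : Hᵀ * (S * H) = ε⁻¹ • 1 - M := by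
    rw [hMdef, ← Matrix.mul_assoc, sub_sub_cancel]
  have hc' : ∀ {k} (Y : Matrix (Fin p) (Fin k) ℝ),
      Hᵀ * (S * (H * Y)) = ε⁻¹ • Y - M * Y := by
    intro k Y
    calc Hᵀ * (S * (H * Y)) = (Hᵀ * (S * H)) * Y := by
          rw [Matrix.mul_assoc, Matrix.mul_assoc]
      _ = ε⁻¹ • Y - M * Y := by rw [hc, Matrix.sub_mul, Matrix.smul_mul, Matrix.one_mul]
  -- Woodbury identity
  have hXw : X = S + S * (H * (M⁻¹ * (Hᵀ * S))) := by
    rw [hX]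
    apply inv_eq_right_inv
    simp only [Matrix.sub_mul, Matrix.mul_add, Matrix.add_mul, Matrix.mul_sub,
      Matrix.smul_mul, Matrix.mul_smul, Matrix.mul_assoc, hSS, hSS', hMM', hMMi',
      hc, hc', Matrix.mul_one, Matrix.one_mul, smul_sub, smul_add, smul_smul,
      mul_inv_cancel₀ hε.ne', inv_mul_cancel₀ hε.ne', one_smul]
    module
  rw [hXw]
  have key : Aᵀ * (S + S * (H * (M⁻¹ * (Hᵀ * S)))) * A + ε⁻¹ • (Eᵀ * E)
      - (A + H * Δ * E)ᵀ * S * (A + H * Δ * E)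
      = (M⁻¹ * (Hᵀ * (S * A)) - Δ * E)ᵀ * M * (M⁻¹ * (Hᵀ * (S * A)) - Δ * E)
        + ε⁻¹ • (Eᵀ * ((1 - Δᵀ * Δ) * E)) := by
    simp only [transpose_add, transpose_sub, transpose_mul, transpose_smul,
      transpose_transpose, transpose_one, hStr, hMtr, hMitr,
      Matrix.sub_mul, Matrix.mul_sub, Matrix.mul_add, Matrix.add_mul,
      Matrix.smul_mul, Matrix.mul_smul, Matrix.mul_assoc, hSS, hSS', hMM', hMMi',
      hMM, hMMi, hc, hc', Matrix.mul_one, Matrix.one_mul, smul_sub, smul_add, smul_smul,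
      mul_inv_cancel₀ hε.ne', inv_mul_cancel₀ hε.ne', one_smul]
    module
  rw [key]
  have p1 : ((M⁻¹ * (Hᵀ * (S * A)) - Δ * E)ᵀ * M * (M⁻¹ * (Hᵀ * (S * A)) - Δ * E)).PosSemidef :=
    psd_conj hM.posSemidef _
  have p2 : (Eᵀ * ((1 - Δᵀ * Δ) * E)).PosSemidef := by
    have := psd_conj hΔ E
    rwa [Matrix.mul_assoc] at this
  exact p1.add (psd_smul p2 (by positivity))
end

section
/- (One-step Riccati construction of Theorem 1.) Let F ∈ ℝ^{n×n}, G ∈ ℝ^{n×m}, H ∈ ℝ^{n×p}, E₁ ∈ ℝ^{l×n}, E₂ ∈ ℝ^{l×m}, let Q ⪰ 0 (n×n) and R ⪰ 0 (m×m) be symmetric, and let ε > 0. Let S₊ be a symmetric positive definite n×n matrix with S₊⁻¹ − ε·H Hᵀ positive definite, set X = (S₊⁻¹ − ε·H Hᵀ)⁻¹, and assume R_ε + Gᵀ X G is positive definite, where Q_ε = Q + ε⁻¹ E₁ᵀ E₁, R_ε = R + ε⁻¹ E₂ᵀ E₂, N_ε = ε⁻¹ E₁ᵀ E₂. Define K =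 (R_ε + Gᵀ X G)⁻¹ (Gᵀ X F + N_εᵀ) and S = Fᵀ X F + Q_ε − (Fᵀ X G + N_ε)(R_ε + Gᵀ X G)⁻¹ (Fᵀ X G + N_ε)ᵀ. Then for every Δ ∈ ℝ^{p×l} with I − ΔᵀΔ positive semidefinite, the matrix S − (F − G K + H Δ (E₁ − E₂ K))ᵀ S₊ (F − G K + H Δ (E₁ − E₂ K)) − Q − Kᵀ R K is positive semidefinite. -/
open Matrix

lemma dot_flip {n m : ℕ} (A : Matrix (Fin n) (Fin m) ℝ) (u : Fin n → ℝ) (v : Fin m → ℝ) :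
    u ⬝ᵥ A *ᵥ v = (Aᵀ *ᵥ u) ⬝ᵥ v := by
  rw [dotProduct_mulVec, mulVec_transpose]

lemma aux_quad {n : ℕ} {Z : Matrix (Fin n) (Fin n) ℝ} (hZ : Z.PosDef)
    (u f : Fin n → ℝ) :
    2 * (u ⬝ᵥ f) ≤ u ⬝ᵥ Z *ᵥ u + f ⬝ᵥ Z⁻¹ *ᵥ f := by
  have hdet : IsUnit Z.det := hZ.det_pos.ne'.isUnit
  have hZsym : Zᵀ = Z := by
    have := hZ.isHermitian
    rwa [IsHermitian, conjTranspose_eq_transpose_of_trivial] at this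
  set v := Z⁻¹ *ᵥ f with hv
  have hZv : Z *ᵥ v = f := by
    rw [hv, mulVec_mulVec, Matrix.mul_nonsing_inv _ hdet, one_mulVec]
  have h0 := hZ.posSemidef.dotProduct_mulVec_nonneg (u - v)
  rw [star_trivial] at h0
  have h1 : v ⬝ᵥ Z *ᵥ u = u ⬝ᵥ f := by
    rw [dot_flip, hZsym, hZv, dotProduct_comm]
  have h2 : u ⬝ᵥ Z *ᵥ v = u ⬝ᵥ f := by rw [hZv]
  have h3 : v ⬝ᵥ Z *ᵥ v = f ⬝ᵥ Z⁻¹ *ᵥ f := by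
    rw [hZv, dotProduct_comm]
  rw [mulVec_sub, dotProduct_sub, sub_dotProduct, sub_dotProduct, h1, h2, h3] at h0
  linarith

lemma aux_core {n p : ℕ} {Splus : Matrix (Fin n) (Fin n) ℝ} (hSplus : Splus.PosDef)
    {H : Matrix (Fin n) (Fin p) ℝ} {ε : ℝ} (hε : 0 < ε)
    (hZ : (Splus⁻¹ - ε • (H * Hᵀ)).PosDef)
    (f : Fin n → ℝ) (g : Fin p → ℝ) :
    (f + H *ᵥ g) ⬝ᵥ Splus *ᵥ (f + H *ᵥ g)
      ≤ f ⬝ᵥ (Splus⁻¹ - ε • (H * Hᵀ))⁻¹ *ᵥ f + ε⁻¹ * (g ⬝ᵥ g) := by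
  set Z := Splus⁻¹ - ε • (H * Hᵀ) with hZdef
  set c := f + H *ᵥ g with hc
  set u := Splus *ᵥ c with hu
  have hSsym : Splusᵀ = Splus := by
    have := hSplus.isHermitian
    rwa [IsHermitian, conjTranspose_eq_transpose_of_trivial] at this
  have hdetS : IsUnit Splus.det := hSplus.det_pos.ne'.isUnit
  -- u ⬝ᵥ c = c ⬝ᵥ Splus *ᵥ c
  have huc : u ⬝ᵥ c = c ⬝ᵥ Splus *ᵥ c := by
    rw [hu, dotProduct_comm]
  have hinvu : Splus⁻¹ *ᵥ u = c := by
    rw [hu, mulVec_mulVec, Matrix.nonsing_inv_mul _ hdetS, one_mulVec]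
  have huSu : u ⬝ᵥ Splus⁻¹ *ᵥ u = c ⬝ᵥ Splus *ᵥ c := by
    rw [hinvu, hu, dotProduct_comm]
  have hA := aux_quad hZ u f
  -- B : 2*(u ⬝ᵥ H *ᵥ g) ≤ ε * (u ⬝ᵥ (H*Hᵀ) *ᵥ u) + ε⁻¹ * (g ⬝ᵥ g)
  have hB : 2 * (u ⬝ᵥ H *ᵥ g) ≤ ε * (u ⬝ᵥ (H * Hᵀ) *ᵥ u) + ε⁻¹ * (g ⬝ᵥ g) := by
    have h0 : (0:ℝ) ≤ (ε • (Hᵀ *ᵥ u) - g) ⬝ᵥ (ε • (Hᵀ *ᵥ u) - g) :=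
      Finset.sum_nonneg fun i _ => mul_self_nonneg _
    have e1 : u ⬝ᵥ (H * Hᵀ) *ᵥ u = (Hᵀ *ᵥ u) ⬝ᵥ (Hᵀ *ᵥ u) := by
      rw [← mulVec_mulVec, dot_flip]
    have e2 : u ⬝ᵥ H *ᵥ g = (Hᵀ *ᵥ u) ⬝ᵥ g := by rw [dot_flip]
    simp only [dotProduct_sub, sub_dotProduct, smul_dotProduct, dotProduct_smul,
      smul_eq_mul, dotProduct_comm g (Hᵀ *ᵥ u)] at h0
    rw [e1, e2]
    have hε' : 0 < ε⁻¹ := inv_pos.mpr hε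
    set a := Hᵀ *ᵥ u ⬝ᵥ Hᵀ *ᵥ u with ha
    set b := Hᵀ *ᵥ u ⬝ᵥ g with hb
    set cg := g ⬝ᵥ g with hcg
    have h2 := mul_nonneg hε'.le h0
    have h3 : ε⁻¹ * (ε * (ε * a - b) - (ε * b - cg)) = ε * a - 2*b + ε⁻¹ * cg := by
      field_simp
      ring
    rw [h3] at h2
    linarith
  -- combine
  have hsplit : u ⬝ᵥ Z *ᵥ u = u ⬝ᵥ Splus⁻¹ *ᵥ u - ε * (u ⬝ᵥ (H * Hᵀ) *ᵥ u) := by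
    rw [hZdef, sub_mulVec, dotProduct_sub, smul_mulVec, dotProduct_smul, smul_eq_mul]
  have hucsplit : u ⬝ᵥ c = u ⬝ᵥ f + u ⬝ᵥ H *ᵥ g := by
    rw [hc, dotProduct_add]
  linarith [hA, hB]


theorem stmt_4 {n m p l : ℕ}
    (F : Matrix (Fin n) (Fin n) ℝ) (G : Matrix (Fin n) (Fin m) ℝ)
    (H : Matrix (Fin n) (Fin p) ℝ)
    (E₁ : Matrix (Fin l) (Fin n) ℝ) (E₂ : Matrix (Fin l) (Fin m) ℝ)
    (Q : Matrix (Fin n) (Fin n) ℝ) (R : Matrix (Fin m) (Fin m) ℝ)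
    (hQ : Q.PosSemidef) (hR : R.PosSemidef)
    (ε : ℝ) (hε : 0 < ε)
    (Splus : Matrix (Fin n) (Fin n) ℝ) (hSplus : Splus.PosDef)
    (hXinv : (Splus⁻¹ - ε • (H * Hᵀ)).PosDef)
    (X : Matrix (Fin n) (Fin n) ℝ)
    (hX : X = (Splus⁻¹ - ε • (H * Hᵀ))⁻¹)
    (Qε : Matrix (Fin n) (Fin n) ℝ) (hQε : Qε = Q + ε⁻¹ • (E₁ᵀ * E₁))
    (Rε : Matrix (Fin m) (Fin m) ℝ) (hRε : Rε = R + ε⁻¹ • (E₂ᵀ * E₂))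
    (Nε : Matrix (Fin n) (Fin m) ℝ) (hNε : Nε = ε⁻¹ • (E₁ᵀ * E₂))
    (hRX : (Rε + Gᵀ * X * G).PosDef)
    (K : Matrix (Fin m) (Fin n) ℝ)
    (hK : K = (Rε + Gᵀ * X * G)⁻¹ * (Gᵀ * X * F + Nεᵀ))
    (S : Matrix (Fin n) (Fin n) ℝ)
    (hS : S = Fᵀ * X * F + Qε
        - (Fᵀ * X * G + Nε) * (Rε + Gᵀ * X * G)⁻¹ * (Fᵀ * X * G + Nε)ᵀ) :
    ∀ Δ : Matrix (Fin p) (Fin l) ℝ,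
      ((1 : Matrix (Fin l) (Fin l) ℝ) - Δᵀ * Δ).PosSemidef →
      (S - (F - G * K + H * Δ * (E₁ - E₂ * K))ᵀ * Splus
            * (F - G * K + H * Δ * (E₁ - E₂ * K))
        - Q - Kᵀ * R * K).PosSemidef := by
  intro Δ hΔ
  have hXsym : Xᵀ = X := by
    rw [hX]
    have := hXinv.inv.isHermitian
    rwa [IsHermitian, conjTranspose_eq_transpose_of_trivial] at this
  have hSsym : Splusᵀ = Splus := by
    have := hSplus.isHermitian
    rwa [IsHermitian, conjTranspose_eq_transpose_of_trivial] at this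
  have hdetW : IsUnit (Rε + Gᵀ * X * G).det := hRX.det_pos.ne'.isUnit
  have hWK : (Rε + Gᵀ * X * G) * K = Gᵀ * X * F + Nεᵀ := by
    rw [hK, ← Matrix.mul_assoc, Matrix.mul_nonsing_inv _ hdetW, Matrix.one_mul]
  have htr : (Fᵀ * X * G + Nε)ᵀ = Gᵀ * X * F + Nεᵀ := by
    rw [transpose_add, transpose_mul, transpose_mul, transpose_transpose, hXsym,
      Matrix.mul_assoc]
  have hterm : (Fᵀ * X * G + Nε) * (Rε + Gᵀ * X * G)⁻¹ * (Fᵀ * X * G + Nε)ᵀ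
      = (Fᵀ * X * G + Nε) * K := by
    rw [Matrix.mul_assoc, htr, ← hK]
  have hGXF : Gᵀ * (X * F)
      = R * K + ε⁻¹ • (E₂ᵀ * (E₂ * K)) + Gᵀ * (X * (G * K)) - ε⁻¹ • (E₂ᵀ * E₁) := by
    have h := hWK
    rw [hRε, hNε] at h
    simp only [Matrix.add_mul, Matrix.smul_mul, transpose_smul, transpose_mul,
      transpose_transpose, Matrix.mul_assoc] at h
    rw [eq_sub_iff_add_eq, ← h]
  have key : S - Q - Kᵀ * R * K
      = (F - G * K)ᵀ * X * (F - G * K) + ε⁻¹ • ((E₁ - E₂ * K)ᵀ * (E₁ - E₂ * K)) := by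
    rw [hS, hterm, hQε, hNε]
    simp only [transpose_sub, transpose_mul, Matrix.sub_mul, Matrix.mul_sub,
      Matrix.add_mul, Matrix.mul_add, Matrix.smul_mul, Matrix.mul_smul,
      smul_sub, smul_add, Matrix.mul_assoc]
    rw [hGXF]
    simp only [Matrix.mul_sub, Matrix.mul_add, Matrix.mul_smul, Matrix.mul_assoc]
    abel
  set Fh := F - G * K with hFh
  set Eh := E₁ - E₂ * K with hEh
  set C := Fh + H * Δ * Eh with hC
  have hgoal : S - Cᵀ * Splus * C - Q - Kᵀ * R * K
      = Fhᵀ * X * Fh + ε⁻¹ • (Ehᵀ * Eh) - Cᵀ * Splus * C := by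
    rw [← key]; abel
  rw [hgoal]
  refine posSemidef_iff_dotProduct_mulVec.mpr ⟨?_, ?_⟩
  · show _ᴴ = _
    rw [conjTranspose_eq_transpose_of_trivial]
    simp only [transpose_sub, transpose_add, transpose_smul, transpose_mul,
      transpose_transpose, hXsym, hSsym, Matrix.mul_assoc]
  · intro x
    rw [star_trivial]
    set f := Fh *ᵥ x with hf
    set e := Eh *ᵥ x with he
    have hcx : C *ᵥ x = f + H *ᵥ (Δ *ᵥ e) := by
      rw [hC, add_mulVec, ← mulVec_mulVec, ← mulVec_mulVec]
    have eA : x ⬝ᵥ (Fhᵀ * X * Fh) *ᵥ x = f ⬝ᵥ X *ᵥ f := by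
      rw [← mulVec_mulVec, ← mulVec_mulVec, dot_flip, transpose_transpose]
    have eB : x ⬝ᵥ (Ehᵀ * Eh) *ᵥ x = e ⬝ᵥ e := by
      rw [← mulVec_mulVec, dot_flip, transpose_transpose]
    have eC : x ⬝ᵥ (Cᵀ * Splus * C) *ᵥ x
        = (f + H *ᵥ (Δ *ᵥ e)) ⬝ᵥ Splus *ᵥ (f + H *ᵥ (Δ *ᵥ e)) := by
      rw [← mulVec_mulVec, ← mulVec_mulVec, dot_flip, transpose_transpose, hcx]
    have hcore := aux_core hSplus hε hXinv f (Δ *ᵥ e)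
    rw [← hX] at hcore
    have hg : (Δ *ᵥ e) ⬝ᵥ (Δ *ᵥ e) ≤ e ⬝ᵥ e := by
      have h0 := hΔ.dotProduct_mulVec_nonneg e
      rw [star_trivial, sub_mulVec, one_mulVec, dotProduct_sub, ← mulVec_mulVec,
        dot_flip Δᵀ, transpose_transpose] at h0
      linarith
    have hmul : ε⁻¹ * ((Δ *ᵥ e) ⬝ᵥ (Δ *ᵥ e)) ≤ ε⁻¹ * (e ⬝ᵥ e) :=
      mul_le_mul_of_nonneg_left hg (inv_pos.mpr hε).le
    rw [sub_mulVec, add_mulVec, dotProduct_sub, dotProduct_add, smul_mulVec,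
      dotProduct_smul, eA, eB, eC, smul_eq_mul]
    linarith
end

section
/- (Theorem 2: the guaranteed cost control is a sub-optimal solution of the deterministic dynamic program.) Fix integers 0 ≤ i < N and matrices F ∈ ℝ^{n×n}, G ∈ ℝ^{n×m}, H ∈ ℝ^{n×p}, E₁ ∈ ℝ^{l×n}, E₂ ∈ ℝ^{l×m}, symmetric Q ⪰ 0 and R ⪰ 0, and reals ε_k > 0 for i ≤ k ≤ N−1. Suppose symmetric positive definite matrices S_k (i ≤ k ≤ N) satisfy: for each k, S_{k+1}⁻¹ − ε_k·H Hᵀ is positive definite, X_{k+1} = (S_{k+1}⁻¹ − ε_k·H Hᵀ)⁻¹, R_{ε_k} + Gᵀ X_{k+1} G is positive definite, and S_k = Fᵀ X_{k+1} F + Q_{ε_k} − (Fᵀ X_{k+1} G + N_{ε_k})(R_{ε_k} + Gᵀ X_{k+1} G)⁻¹ (Fᵀ X_{k+1} G + N_{ε_k})ᵀ, where Q_{ε_k} = Q + ε_k⁻¹ E₁ᵀ E₁, R_{ε_k} = R + ε_k⁻¹ E₂ᵀ E₂, N_{ε_k} = ε_k⁻¹ E₁ᵀ E₂. Then for every initial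 state x_i ∈ ℝⁿ there exists a control sequence u_i, …, u_{N−1} ∈ ℝᵐ such that the deterministic trajectory x_{k+1} = F x_k + G u_k satisfies x_Nᵀ S_N x_N + Σ_{k=i}^{N−1} c_k(x_k, u_k) ≤ x_iᵀ S_i x_i, where c_k(x, u) = xᵀ Q_{ε_k} x + uᵀ R_{ε_k} u + 2 xᵀ N_{ε_k} u. -/
open Matrix

private lemma herm_t' {k : ℕ} {M : Matrix (Fin k) (Fin k) ℝ} (hM : M.IsHermitian) : Mᵀ = M := by
  have := hM.eq
  rwa [conjTranspose_eq_transpose_of_trivial] at this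

private lemma trans_dot' {a b : ℕ} (A : Matrix (Fin a) (Fin b) ℝ) (v : Fin a → ℝ) (w : Fin b → ℝ) :
    v ⬝ᵥ A *ᵥ w = (Aᵀ *ᵥ v) ⬝ᵥ w := by
  rw [dotProduct_mulVec, mulVec_transpose]

private lemma herm_dot' {k : ℕ} {M : Matrix (Fin k) (Fin k) ℝ} (hM : M.IsHermitian)
    (v w : Fin k → ℝ) : v ⬝ᵥ M *ᵥ w = (M *ᵥ v) ⬝ᵥ w := by
  rw [trans_dot', herm_t' hM]

private lemma quad_dot' {a b c : ℕ} (A : Matrix (Fin a) (Fin b) ℝ) (M : Matrix (Fin a) (Fin a) ℝ)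
    (B : Matrix (Fin a) (Fin c) ℝ) (x : Fin b → ℝ) (y : Fin c → ℝ) :
    (A *ᵥ x) ⬝ᵥ M *ᵥ (B *ᵥ y) = x ⬝ᵥ (Aᵀ * M * B) *ᵥ y := by
  rw [← mulVec_mulVec, ← mulVec_mulVec, trans_dot' Aᵀ, transpose_transpose, mulVec_mulVec]

private lemma smul_psd' {a : ℕ} {c : ℝ} (hc : 0 ≤ c) {M : Matrix (Fin a) (Fin a) ℝ}
    (hM : M.PosSemidef) : (c • M).PosSemidef := by
  refine .of_dotProduct_mulVec_nonneg ?_ (fun v => ?_)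
  · rw [Matrix.IsHermitian, conjTranspose_smul, star_trivial, hM.1.eq]
  · have := hM.dotProduct_mulVec_nonneg v
    simp only [smul_mulVec, dotProduct_smul, smul_eq_mul]
    simp only [RCLike.star_def, star_trivial] at this ⊢
    exact mul_nonneg hc (by simpa using this)

private lemma inv_mono_quad' {k : ℕ} {A B : Matrix (Fin k) (Fin k) ℝ} (hA : A.PosDef)
    (hB : B.PosDef) (h : (A⁻¹ - B⁻¹).PosSemidef) (v : Fin k → ℝ) :
    v ⬝ᵥ A *ᵥ v ≤ v ⬝ᵥ B *ᵥ v := by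
  have hAinv : A⁻¹ * A = 1 := nonsing_inv_mul A hA.det_pos.ne'.isUnit
  have hBinv : B⁻¹ * B = 1 := nonsing_inv_mul B hB.det_pos.ne'.isUnit
  have hBiH : (B⁻¹).IsHermitian := hB.1.inv
  set w : Fin k → ℝ := A *ᵥ v with hw
  have e1 : B⁻¹ *ᵥ (B *ᵥ v) = v := by rw [mulVec_mulVec, hBinv, one_mulVec]
  have key0 : (0:ℝ) ≤ (w - B *ᵥ v) ⬝ᵥ B⁻¹ *ᵥ (w - B *ᵥ v) := by
    have := (hB.inv.posSemidef).dotProduct_mulVec_nonneg (w - B *ᵥ v)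
    simpa using this
  have expand : (w - B *ᵥ v) ⬝ᵥ B⁻¹ *ᵥ (w - B *ᵥ v)
      = w ⬝ᵥ B⁻¹ *ᵥ w - 2 * (v ⬝ᵥ w) + v ⬝ᵥ B *ᵥ v := by
    have h1 : (B *ᵥ v) ⬝ᵥ B⁻¹ *ᵥ w = v ⬝ᵥ w := by
      rw [herm_dot' hBiH, e1]
    have h2 : w ⬝ᵥ B⁻¹ *ᵥ (B *ᵥ v) = v ⬝ᵥ w := by
      rw [e1, dotProduct_comm]
    have h3 : (B *ᵥ v) ⬝ᵥ B⁻¹ *ᵥ (B *ᵥ v) = v ⬝ᵥ B *ᵥ v := by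
      rw [e1, dotProduct_comm]
    simp only [sub_dotProduct, mulVec_sub, dotProduct_sub, h1, h2, h3]
    ring
  have key1 : 2 * (v ⬝ᵥ w) - w ⬝ᵥ B⁻¹ *ᵥ w ≤ v ⬝ᵥ B *ᵥ v := by
    rw [expand] at key0; linarith
  have e2 : A⁻¹ *ᵥ w = v := by rw [hw, mulVec_mulVec, hAinv, one_mulVec]
  have eA : v ⬝ᵥ A *ᵥ v = 2 * (v ⬝ᵥ w) - w ⬝ᵥ A⁻¹ *ᵥ w := by
    rw [e2]
    have : v ⬝ᵥ A *ᵥ v = w ⬝ᵥ v := by rw [hw, dotProduct_comm]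
    rw [this, dotProduct_comm w v]; ring
  have hd : (0:ℝ) ≤ w ⬝ᵥ (A⁻¹ - B⁻¹) *ᵥ w := by
    have := h.dotProduct_mulVec_nonneg w; simpa using this
  have : w ⬝ᵥ A⁻¹ *ᵥ w - w ⬝ᵥ B⁻¹ *ᵥ w = w ⬝ᵥ (A⁻¹ - B⁻¹) *ᵥ w := by
    simp [sub_mulVec, dotProduct_sub]
  linarith [key1]

private lemma step_eq' {n m : ℕ} (F : Matrix (Fin n) (Fin n) ℝ) (G : Matrix (Fin n) (Fin m) ℝ)
    (X Qe : Matrix (Fin n) (Fin n) ℝ) (Re : Matrix (Fin m) (Fin m) ℝ)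
    (Ne : Matrix (Fin n) (Fin m) ℝ) (hX : X.IsHermitian)
    (hP : (Re + Gᵀ * X * G).PosDef) (x : Fin n → ℝ) (u : Fin m → ℝ)
    (hu : u = -(((Re + Gᵀ * X * G)⁻¹ * (Fᵀ * X * G + Ne)ᵀ) *ᵥ x)) :
    (F *ᵥ x + G *ᵥ u) ⬝ᵥ X *ᵥ (F *ᵥ x + G *ᵥ u)
      + (x ⬝ᵥ Qe *ᵥ x + u ⬝ᵥ Re *ᵥ u + 2 * (x ⬝ᵥ Ne *ᵥ u))
    = x ⬝ᵥ (Fᵀ * X * F + Qe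
        - (Fᵀ * X * G + Ne) * (Re + Gᵀ * X * G)⁻¹ * (Fᵀ * X * G + Ne)ᵀ) *ᵥ x := by
  set P := Re + Gᵀ * X * G with hPdef
  set W := Fᵀ * X * G + Ne with hWdef
  set w : Fin m → ℝ := Wᵀ *ᵥ x with hwdef
  have hPP : P * P⁻¹ = 1 := mul_nonsing_inv P hP.det_pos.ne'.isUnit
  have hu' : u = -(P⁻¹ *ᵥ w) := by rw [hu, ← mulVec_mulVec]
  have A1 : (F *ᵥ x) ⬝ᵥ X *ᵥ (F *ᵥ x) = x ⬝ᵥ (Fᵀ * X * F) *ᵥ x := quad_dot' F X F x x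
  have A2 : (G *ᵥ u) ⬝ᵥ X *ᵥ (G *ᵥ u) = u ⬝ᵥ (Gᵀ * X * G) *ᵥ u := quad_dot' G X G u u
  have A3 : (F *ᵥ x) ⬝ᵥ X *ᵥ (G *ᵥ u) = x ⬝ᵥ (Fᵀ * X * G) *ᵥ u := quad_dot' F X G x u
  have A4 : (G *ᵥ u) ⬝ᵥ X *ᵥ (F *ᵥ x) = x ⬝ᵥ (Fᵀ * X * G) *ᵥ u := by
    rw [quad_dot' G X F u x, trans_dot']
    rw [show (Gᵀ * X * F)ᵀ = Fᵀ * X * G by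
      rw [transpose_mul, transpose_mul, transpose_transpose, herm_t' hX, Matrix.mul_assoc]]
    exact dotProduct_comm _ _
  have hPu : P *ᵥ u = -w := by
    rw [hu', mulVec_neg, mulVec_mulVec, hPP, one_mulVec]
  have B1 : u ⬝ᵥ P *ᵥ u = w ⬝ᵥ P⁻¹ *ᵥ w := by
    rw [hPu, hu']
    rw [dotProduct_neg, neg_dotProduct, neg_neg, dotProduct_comm]
  have B2 : x ⬝ᵥ W *ᵥ u = -(w ⬝ᵥ P⁻¹ *ᵥ w) := by
    rw [trans_dot' W, ← hwdef, hu', dotProduct_neg]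
  have B3 : x ⬝ᵥ (W * P⁻¹ * Wᵀ) *ᵥ x = w ⬝ᵥ P⁻¹ *ᵥ w := by
    rw [← mulVec_mulVec, ← mulVec_mulVec, trans_dot' W, ← hwdef]
  have LHSexp : (F *ᵥ x + G *ᵥ u) ⬝ᵥ X *ᵥ (F *ᵥ x + G *ᵥ u)
      = x ⬝ᵥ (Fᵀ * X * F) *ᵥ x + 2 * (x ⬝ᵥ (Fᵀ * X * G) *ᵥ u) + u ⬝ᵥ (Gᵀ * X * G) *ᵥ u := by
    simp only [mulVec_add, dotProduct_add, add_dotProduct, A1, A2, A3, A4]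
    ring
  have hPsplit : u ⬝ᵥ Re *ᵥ u + u ⬝ᵥ (Gᵀ * X * G) *ᵥ u = u ⬝ᵥ P *ᵥ u := by
    rw [hPdef, add_mulVec, dotProduct_add]
  have hWsplit : x ⬝ᵥ (Fᵀ * X * G) *ᵥ u + x ⬝ᵥ Ne *ᵥ u = x ⬝ᵥ W *ᵥ u := by
    rw [hWdef, add_mulVec, dotProduct_add]
  have RHSexp : x ⬝ᵥ (Fᵀ * X * F + Qe - W * P⁻¹ * Wᵀ) *ᵥ x
      = x ⬝ᵥ (Fᵀ * X * F) *ᵥ x + x ⬝ᵥ Qe *ᵥ x - w ⬝ᵥ P⁻¹ *ᵥ w := by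
    rw [sub_mulVec, add_mulVec, dotProduct_sub, dotProduct_add, B3]
  rw [LHSexp, RHSexp]
  nlinarith [B1, B2, hPsplit, hWsplit]

private lemma telescope' (f g : ℕ → ℝ) (i N : ℕ) (hiN : i ≤ N)
    (h : ∀ k, i ≤ k → k < N → f (k + 1) + g k ≤ f k) :
    f N + ∑ k ∈ Finset.Ico i N, g k ≤ f i := by
  induction N, hiN using Nat.le_induction with
  | base => simp
  | succ N hN ih =>
    rw [Finset.sum_Ico_succ_top hN]
    have h1 := h N hN (Nat.lt_succ_self N)
    have h2 := ih (fun k hk hk' => h k hk (hk'.trans (Nat.lt_succ_self N)))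
    linarith

theorem stmt_7 {n m p l : ℕ} (i N : ℕ) (hiN : i < N)
    (F : Matrix (Fin n) (Fin n) ℝ) (G : Matrix (Fin n) (Fin m) ℝ)
    (H : Matrix (Fin n) (Fin p) ℝ)
    (E₁ : Matrix (Fin l) (Fin n) ℝ) (E₂ : Matrix (Fin l) (Fin m) ℝ)
    (Q : Matrix (Fin n) (Fin n) ℝ) (R : Matrix (Fin m) (Fin m) ℝ)
    (hQ : Q.PosSemidef) (hR : R.PosSemidef)
    (ε : ℕ → ℝ) (hε : ∀ k, i ≤ k → k < N → 0 < ε k)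
    (S : ℕ → Matrix (Fin n) (Fin n) ℝ)
    (hS : ∀ k, i ≤ k → k ≤ N → (S k).PosDef)
    (X : ℕ → Matrix (Fin n) (Fin n) ℝ)
    (Qε : ℕ → Matrix (Fin n) (Fin n) ℝ)
    (hQε : ∀ k, Qε k = Q + (ε k)⁻¹ • (E₁ᵀ * E₁))
    (Rε : ℕ → Matrix (Fin m) (Fin m) ℝ)
    (hRε : ∀ k, Rε k = R + (ε k)⁻¹ • (E₂ᵀ * E₂))
    (Nε : ℕ → Matrix (Fin n) (Fin m) ℝ)
    (hNε : ∀ k, Nε k = (ε k)⁻¹ • (E₁ᵀ * E₂))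
    (hXpd : ∀ k, i ≤ k → k < N → ((S (k + 1))⁻¹ - ε k • (H * Hᵀ)).PosDef)
    (hX : ∀ k, i ≤ k → k < N → X (k + 1) = ((S (k + 1))⁻¹ - ε k • (H * Hᵀ))⁻¹)
    (hRX : ∀ k, i ≤ k → k < N → (Rε k + Gᵀ * X (k + 1) * G).PosDef)
    (hSrec : ∀ k, i ≤ k → k < N →
      S k = Fᵀ * X (k + 1) * F + Qε k
        - (Fᵀ * X (k + 1) * G + Nε k) * (Rε k + Gᵀ * X (k + 1) * G)⁻¹
            * (Fᵀ * X (k + 1) * G + Nε k)ᵀ) :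
    ∀ xi : Fin n → ℝ, ∃ u : ℕ → Fin m → ℝ,
      ∀ x : ℕ → Fin n → ℝ, x i = xi →
        (∀ k, i ≤ k → k < N → x (k + 1) = F.mulVec (x k) + G.mulVec (u k)) →
        x N ⬝ᵥ (S N).mulVec (x N)
          + ∑ k ∈ Finset.Ico i N,
              (x k ⬝ᵥ (Qε k).mulVec (x k) + u k ⬝ᵥ (Rε k).mulVec (u k)
                + 2 * (x k ⬝ᵥ (Nε k).mulVec (u k)))
          ≤ x i ⬝ᵥ (S i).mulVec (x i) := by
  intro xi
  -- feedback gains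
  set K : ℕ → Matrix (Fin m) (Fin n) ℝ :=
    fun k => (Rε k + Gᵀ * X (k + 1) * G)⁻¹ * (Fᵀ * X (k + 1) * G + Nε k)ᵀ with hK
  -- nominal trajectory
  set traj : ℕ → Fin n → ℝ :=
    fun j => Nat.rec xi (fun j v => F *ᵥ v + G *ᵥ (-(K (i + j) *ᵥ v))) j with htraj
  refine ⟨fun k => -(K k *ᵥ traj (k - i)), ?_⟩
  intro x hxi hdyn
  -- x agrees with traj on [i, N]
  have hagree : ∀ j, i + j ≤ N → x (i + j) = traj j := by
    intro j
    induction j with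
    | zero => intro _; exact hxi
    | succ j ih =>
      intro hj
      have hj' : i + j < N := by omega
      have hx' := hdyn (i + j) (Nat.le_add_right i j) hj'
      have hxj : x (i + j) = traj j := ih (by omega)
      have : (i + j) - i = j := by omega
      rw [show i + (j + 1) = (i + j) + 1 by ring, hx']
      simp only [this, hxj]
      rfl
  have hxval : ∀ k, i ≤ k → k ≤ N → x k = traj (k - i) := by
    intro k hk hk'
    have h2 := hagree (k - i) (by omega)
    rwa [show i + (k - i) = k by omega] at h2
  have hukey : ∀ k, i ≤ k → k < N →
      -(K k *ᵥ traj (k - i)) = -(K k *ᵥ x k) := by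
    intro k hk hk'
    rw [hxval k hk (le_of_lt hk')]
  -- per-step inequality and telescoping
  refine telescope' (fun k => x k ⬝ᵥ (S k) *ᵥ x k)
    (fun k => x k ⬝ᵥ (Qε k) *ᵥ x k + (-(K k *ᵥ traj (k - i))) ⬝ᵥ (Rε k) *ᵥ (-(K k *ᵥ traj (k - i)))
      + 2 * (x k ⬝ᵥ (Nε k) *ᵥ (-(K k *ᵥ traj (k - i))))) i N (le_of_lt hiN) ?_
  intro k hk hk'
  have hXM : ((S (k + 1))⁻¹ - ε k • (H * Hᵀ)).PosDef := hXpd k hk hk'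
  have hXk : (X (k + 1)).PosDef := (hX k hk hk') ▸ hXM.inv
  have hSk1 : (S (k + 1)).PosDef := hS (k + 1) (by omega) (by omega)
  have hPk : (Rε k + Gᵀ * X (k + 1) * G).PosDef := hRX k hk hk'
  set uk : Fin m → ℝ := -(K k *ᵥ traj (k - i)) with huk
  have hukx : uk = -(K k *ᵥ x k) := hukey k hk hk'
  have hxk1 : x (k + 1) = F *ᵥ x k + G *ᵥ uk := hdyn k hk hk'
  -- completion of squares
  have hstep := step_eq' F G (X (k + 1)) (Qε k) (Rε k) (Nε k) hXk.1 hPk (x k) uk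
    (by exact hukx)
  rw [← hSrec k hk hk'] at hstep
  -- S (k+1) ≤ X (k+1) in quadratic form
  have hXinv : (X (k + 1))⁻¹ = (S (k + 1))⁻¹ - ε k • (H * Hᵀ) := by
    rw [hX k hk hk', nonsing_inv_nonsing_inv _ hXM.det_pos.ne'.isUnit]
  have hpsd : ((S (k + 1))⁻¹ - (X (k + 1))⁻¹).PosSemidef := by
    rw [hXinv]
    have h1 : (H * Hᵀ).PosSemidef := by
      have := posSemidef_self_mul_conjTranspose H
      rwa [conjTranspose_eq_transpose_of_trivial] at this
    simpa using smul_psd' (le_of_lt (hε k hk hk')) h1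
  have hmono := inv_mono_quad' hSk1 hXk hpsd (x (k + 1))
  have hXform : (F *ᵥ x k + G *ᵥ uk) ⬝ᵥ (X (k + 1)) *ᵥ (F *ᵥ x k + G *ᵥ uk)
      = x (k + 1) ⬝ᵥ (X (k + 1)) *ᵥ x (k + 1) := by rw [hxk1]
  rw [hXform] at hstep
  linarith [hstep, hmono]
end

section
/- (Lemma 4: recursive disturbance-norm bound.) Let F̃ ∈ ℝ^{n×n}, G ∈ ℝ^{n×m}, H ∈ ℝ^{n×p}, Ẽ₁ ∈ ℝ^{l×n}, E₂ ∈ ℝ^{l×m}. Define φ_k(x, v) = ‖Ẽ₁ x + E₂ v‖₂, and let ρ_i ≥ 0 be reals such that ‖Ẽ₁ F̃^i H z‖₂ ≤ ρ_i ‖z‖₂ for all z ∈ ℝᵖ and all i ≥ 0. Define recursively c(k, i) = ρ_{k−i−1} + Σ_{j=0}^{k−i−2} ρ_j · c(k−j−1, i) for all integers 0 ≤ i < k. Let sequences (x̄_k), (x_k) in ℝⁿ, (v_k) in ℝᵐ, (w_k) in ℝᵖ satisfy x̄_{k+1} = F̃ x̄_k + G v_k + H w_k, x_{k+1} = F̃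 x_k + G v_k, x̄_0 = x_0, and ‖w_k‖₂ ≤ φ_k(x̄_k, v_k) for all k. Then for every k ≥ 0, ‖w_k‖₂ ≤ φ_k(x̄_k, v_k) ≤ φ_k(x_k, v_k) + Σ_{i=0}^{k−1} c(k, i) · φ_i(x_i, v_i). -/
open Matrix

/-- Euclidean norm of a real vector. -/
noncomputable def vecEnorm {d : ℕ} (x : Fin d → ℝ) : ℝ := Real.sqrt (x ⬝ᵥ x)

lemma vecEnorm_eq {d : ℕ} (x : Fin d → ℝ) :
    vecEnorm x = ‖(WithLp.equiv 2 (Fin d → ℝ)).symm x‖ := by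
  rw [vecEnorm, EuclideanSpace.norm_eq]
  congr 1
  simp [dotProduct, Real.norm_eq_abs, sq_abs, sq]

lemma vecEnorm_nonneg {d : ℕ} (x : Fin d → ℝ) : 0 ≤ vecEnorm x := Real.sqrt_nonneg _

lemma vecEnorm_zero {d : ℕ} : vecEnorm (0 : Fin d → ℝ) = 0 := by simp [vecEnorm]

lemma vecEnorm_add_le {d : ℕ} (a b : Fin d → ℝ) : vecEnorm (a + b) ≤ vecEnorm a + vecEnorm b := by
  rw [vecEnorm_eq, vecEnorm_eq, vecEnorm_eq]
  exact norm_add_le ((WithLp.equiv 2 (Fin d → ℝ)).symm a) ((WithLp.equiv 2 (Fin d → ℝ)).symm b)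

lemma vecEnorm_sum_le {d : ℕ} {ι : Type*} (s : Finset ι) (f : ι → Fin d → ℝ) :
    vecEnorm (∑ i ∈ s, f i) ≤ ∑ i ∈ s, vecEnorm (f i) := by
  classical
  induction s using Finset.induction with
  | empty => simp [vecEnorm_zero]
  | insert _ _ hx ih =>
    rw [Finset.sum_insert hx, Finset.sum_insert hx]
    exact (vecEnorm_add_le _ _).trans (by linarith)

lemma mulVec_sum' {a b : ℕ} (A : Matrix (Fin a) (Fin b) ℝ) {ι : Type*} (s : Finset ι)
    (f : ι → Fin b → ℝ) : A.mulVec (∑ i ∈ s, f i) = ∑ i ∈ s, A.mulVec (f i) :=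
  map_sum A.mulVecLin f s

lemma tri_swap (k : ℕ) (a : ℕ → ℕ → ℝ) :
    ∑ j ∈ Finset.range k, ∑ i ∈ Finset.range (k - 1 - j), a j i
      = ∑ i ∈ Finset.range k, ∑ j ∈ Finset.range (k - 1 - i), a j i := by
  have pad : ∀ (b : ℕ → ℕ → ℝ) (j : ℕ),
      ∑ i ∈ Finset.range (k - 1 - j), b j i
        = ∑ i ∈ Finset.range k, if i + j + 1 < k then b j i else 0 := by
    intro b j
    rw [← Finset.sum_filter]
    apply Finset.sum_congr _ (fun _ _ => rfl)
    ext i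
    simp only [Finset.mem_range, Finset.mem_filter]
    omega
  calc ∑ j ∈ Finset.range k, ∑ i ∈ Finset.range (k - 1 - j), a j i
      = ∑ j ∈ Finset.range k, ∑ i ∈ Finset.range k, if i + j + 1 < k then a j i else 0 :=
        Finset.sum_congr rfl (fun j _ => pad a j)
    _ = ∑ i ∈ Finset.range k, ∑ j ∈ Finset.range k, if i + j + 1 < k then a j i else 0 :=
        Finset.sum_comm
    _ = ∑ i ∈ Finset.range k, ∑ j ∈ Finset.range (k - 1 - i), a j i := by
        refine Finset.sum_congr rfl (fun i _ => ?_)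
        rw [pad (fun i j => a j i) i]
        exact Finset.sum_congr rfl (fun j _ => if_congr (by omega) rfl rfl)

theorem stmt_11 {n m p l : ℕ}
    (Ftil : Matrix (Fin n) (Fin n) ℝ) (G : Matrix (Fin n) (Fin m) ℝ)
    (H : Matrix (Fin n) (Fin p) ℝ)
    (Etil₁ : Matrix (Fin l) (Fin n) ℝ) (E₂ : Matrix (Fin l) (Fin m) ℝ)
    (φ : (Fin n → ℝ) → (Fin m → ℝ) → ℝ)
    (hφ : ∀ x v, φ x v = vecEnorm (Etil₁.mulVec x + E₂.mulVec v))
    (ρ : ℕ → ℝ) (hρ0 : ∀ i, 0 ≤ ρ i)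
    (hρ : ∀ (i : ℕ) (z : Fin p → ℝ),
      vecEnorm ((Etil₁ * Ftil ^ i * H).mulVec z) ≤ ρ i * vecEnorm z)
    (c : ℕ → ℕ → ℝ)
    (hc : ∀ i k, i < k →
      c k i = ρ (k - i - 1) + ∑ j ∈ Finset.range (k - i - 1), ρ j * c (k - j - 1) i)
    (xbar x : ℕ → Fin n → ℝ) (v : ℕ → Fin m → ℝ) (w : ℕ → Fin p → ℝ)
    (hxbar : ∀ k, xbar (k + 1) = Ftil.mulVec (xbar k) + G.mulVec (v k) + H.mulVec (w k))
    (hx : ∀ k, x (k + 1) = Ftil.mulVec (x k) + G.mulVec (v k))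
    (h0 : xbar 0 = x 0)
    (hw : ∀ k, vecEnorm (w k) ≤ φ (xbar k) (v k)) :
    ∀ k, vecEnorm (w k) ≤ φ (xbar k) (v k) ∧
      φ (xbar k) (v k) ≤ φ (x k) (v k) + ∑ i ∈ Finset.range k, c k i * φ (x i) (v i) := by
  -- difference formula
  have hd : ∀ k, xbar k - x k
      = ∑ j ∈ Finset.range k, (Ftil ^ j).mulVec (H.mulVec (w (k - 1 - j))) := by
    intro k
    induction k with
    | zero => simp [h0]
    | succ k ih =>
      have step : xbar (k + 1) - x (k + 1)
          = Ftil.mulVec (xbar k - x k) + H.mulVec (w k) := by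
        rw [hxbar, hx, Matrix.mulVec_sub]
        abel
      rw [step, ih,
        Finset.sum_range_succ' (fun j => (Ftil ^ j).mulVec (H.mulVec (w (k + 1 - 1 - j))))]
      simp only [pow_zero, Matrix.one_mulVec, Nat.add_sub_cancel, Nat.sub_zero]
      congr 1
      rw [mulVec_sum']
      refine Finset.sum_congr rfl (fun j hj => ?_)
      rw [Matrix.mulVec_mulVec, ← pow_succ']
      have : k - 1 - j = k - (j + 1) := by omega
      rw [this]
  -- bound on the disturbance accumulation
  have hEd : ∀ k, vecEnorm (Etil₁.mulVec (xbar k - x k))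
      ≤ ∑ j ∈ Finset.range k, ρ j * φ (xbar (k - 1 - j)) (v (k - 1 - j)) := by
    intro k
    rw [hd k, mulVec_sum']
    refine (vecEnorm_sum_le _ _).trans (Finset.sum_le_sum fun j _ => ?_)
    rw [Matrix.mulVec_mulVec, Matrix.mulVec_mulVec]
    exact (hρ j _).trans (mul_le_mul_of_nonneg_left (hw _) (hρ0 j))
  have hφ0 : ∀ a b, 0 ≤ φ a b := fun a b => by rw [hφ]; exact vecEnorm_nonneg _
  have main : ∀ k, φ (xbar k) (v k)
      ≤ φ (x k) (v k) + ∑ i ∈ Finset.range k, c k i * φ (x i) (v i) := by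
    intro k
    induction k using Nat.strong_induction_on with
    | _ k ih =>
    have tri : φ (xbar k) (v k)
        ≤ φ (x k) (v k) + vecEnorm (Etil₁.mulVec (xbar k - x k)) := by
      rw [hφ, hφ]
      have hsplit : Etil₁.mulVec (xbar k) + E₂.mulVec (v k)
          = (Etil₁.mulVec (x k) + E₂.mulVec (v k)) + Etil₁.mulVec (xbar k - x k) := by
        rw [Matrix.mulVec_sub]; abel
      rw [hsplit]
      exact vecEnorm_add_le _ _
    have h3 : ∑ j ∈ Finset.range k, ρ j * φ (xbar (k - 1 - j)) (v (k - 1 - j))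
        ≤ ∑ j ∈ Finset.range k, ρ j * (φ (x (k - 1 - j)) (v (k - 1 - j))
            + ∑ i ∈ Finset.range (k - 1 - j), c (k - 1 - j) i * φ (x i) (v i)) := by
      refine Finset.sum_le_sum fun j hj => ?_
      rw [Finset.mem_range] at hj
      exact mul_le_mul_of_nonneg_left (ih (k - 1 - j) (by omega)) (hρ0 j)
    have h4 : ∑ j ∈ Finset.range k, ρ j * (φ (x (k - 1 - j)) (v (k - 1 - j))
            + ∑ i ∈ Finset.range (k - 1 - j), c (k - 1 - j) i * φ (x i) (v i))
        = ∑ i ∈ Finset.range k, c k i * φ (x i) (v i) := by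
      simp only [mul_add, Finset.sum_add_distrib, Finset.mul_sum]
      have refl1 : ∑ j ∈ Finset.range k, ρ j * φ (x (k - 1 - j)) (v (k - 1 - j))
          = ∑ i ∈ Finset.range k, ρ (k - 1 - i) * φ (x i) (v i) := by
        rw [← Finset.sum_range_reflect (fun i => ρ (k - 1 - i) * φ (x i) (v i)) k]
        refine Finset.sum_congr rfl fun j hj => ?_
        rw [Finset.mem_range] at hj
        have : k - 1 - (k - 1 - j) = j := by omega
        rw [this]
      rw [refl1, tri_swap k (fun j i => ρ j * (c (k - 1 - j) i * φ (x i) (v i))),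
        ← Finset.sum_add_distrib]
      refine Finset.sum_congr rfl fun i hi => ?_
      rw [Finset.mem_range] at hi
      rw [hc i k hi]
      have e1 : k - i - 1 = k - 1 - i := by omega
      rw [add_mul, e1, Finset.sum_mul]
      congr 1
      refine Finset.sum_congr rfl fun j hj => ?_
      have e2 : k - j - 1 = k - 1 - j := by omega
      rw [e2]; ring
    linarith [tri, hEd k, h3, h4.le, h4.ge]
  exact fun k => ⟨hw k, main k⟩
end
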